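/- Let F be a field of characteristic not 2, K a quadratic field extension of F with nontrivial F-automorphism σ, and b ∈ K \ F. Then the nonassociative quaternion algebra Cay(K,b) has no zero divisors: for x, y ∈ K × K, if x·y = (0,0) with respect to the multiplication (u,v)·(u',v') = (uu' + b·v'·σ(v), σ(u)·v' + u'·v), then x = (0,0) or y = (0,0). -/

import Mathlib

/-- Multiplication of the nonassociative quaternion algebra `Cay(K, b)`:
`(u,v)·(u',v') = (uu' + b·v'·σ(v), σ(u)·v' + u'·v)`. -/
def cayMul {F K : Type*} [Field F] [Field K] [Algebra F K]
    (σ : K ≃ₐ[F] K) (b : K) (x y : K × K) : K × K :=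
  (x.1 * y.1 + b * y.2 * σ x.2, σ x.1 * y.2 + y.1 * x.2)

open Module IntermediateField in
theorem cay_key {F K : Type*} [Field F] [Field K] [Algebra F K]
    (hdim : Module.finrank F K = 2)
    (σ : K ≃ₐ[F] K) (hσ : σ ≠ AlgEquiv.refl) :
    (∀ c : K, σ c = c → c ∈ Set.range (algebraMap F K)) ∧ ∀ u : K, σ (σ u) = u := by
  classical
  have hfd : FiniteDimensional F K := FiniteDimensional.of_finrank_pos (by omega)
  set H := Subgroup.zpowers σ with hH
  have hcard : finrank (fixedField H) K = Fintype.card H :=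
    (finrank_fixedField_eq_card H).trans Nat.card_eq_fintype_card
  have hzc : Fintype.card H = orderOf σ := Fintype.card_zpowers
  have htower : finrank F (fixedField H) * finrank (fixedField H) K = 2 := by
    rw [finrank_mul_finrank]; exact hdim
  have hone : σ ≠ 1 := hσ
  have hord1 : orderOf σ ≠ 1 := fun h => hone (orderOf_eq_one_iff.mp h)
  have hdvd : orderOf σ ∣ 2 :=
    Dvd.intro_left (finrank F (fixedField H)) (by rw [← hzc, ← hcard]; exact htower)
  have hord : orderOf σ = 2 := by
    have h1 := Nat.le_of_dvd (by norm_num) hdvd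
    have h2 := orderOf_pos σ
    omega
  have hsq : σ * σ = 1 := by
    have := pow_orderOf_eq_one σ
    rwa [hord, pow_two] at this
  have hinv : ∀ u : K, σ (σ u) = u := by
    intro u
    have := congrArg (fun e : K ≃ₐ[F] K => e u) hsq
    simpa using this
  refine ⟨?_, hinv⟩
  intro c hc
  have hrank1 : finrank F (fixedField H) = 1 := by
    rw [hcard, hzc, hord] at htower; omega
  have hbot : fixedField H = ⊥ := finrank_eq_one_iff.mp hrank1
  have hmem : c ∈ fixedField H := by
    intro g
    obtain ⟨n, hn⟩ := Subgroup.mem_zpowers_iff.mp g.2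
    have key : ∀ m : ℤ, (σ ^ m) c = c := by
      intro m
      induction m using Int.induction_on with
      | zero => simp
      | succ k ih =>
          rw [zpow_add_one, AlgEquiv.mul_apply, hc, ih]
      | pred k ih =>
          rw [zpow_sub_one, AlgEquiv.mul_apply]
          have hs : σ (σ⁻¹ c) = c := by
            rw [← AlgEquiv.mul_apply, mul_inv_cancel]; rfl
          have : σ⁻¹ c = c := σ.injective (by rw [hs, hc])
          rw [this, ih]
    have : (g : K ≃ₐ[F] K) c = c := by rw [← hn]; exact key n
    exact this
  rw [hbot] at hmem
  exact IntermediateField.mem_bot.mp hmem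

/-- The nonassociative quaternion algebra `Cay(K,b)` over a field `F` of characteristic
not `2`, where `K/F` is a quadratic field extension with nontrivial `F`-automorphism `σ`
and `b ∈ K \ F`, has no zero divisors. -/
theorem cay_no_zero_divisors {F K : Type*} [Field F] [Field K] [Algebra F K]
    (hchar : ringChar F ≠ 2)
    (hdim : Module.finrank F K = 2)
    (σ : K ≃ₐ[F] K) (hσ : σ ≠ AlgEquiv.refl)
    (b : K) (hb : b ∉ Set.range (algebraMap F K))
    (x y : K × K) (hxy : cayMul σ b x y = 0) :
    x = 0 ∨ y = 0 := by
  obtain ⟨hfix, hinv⟩ := cay_key hdim σ hσ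
  by_contra hcon
  push_neg at hcon
  obtain ⟨hx, hy⟩ := hcon
  have h1 : x.1 * y.1 + b * y.2 * σ x.2 = 0 := congrArg Prod.fst hxy
  have h2 : σ x.1 * y.2 + y.1 * x.2 = 0 := congrArg Prod.snd hxy
  by_cases hv : x.2 = 0
  · have hu : x.1 ≠ 0 := fun h0 => hx (Prod.ext h0 hv)
    rw [hv, map_zero, mul_zero, add_zero] at h1
    rw [hv, mul_zero, add_zero] at h2
    have hu' : y.1 = 0 := by
      rcases mul_eq_zero.mp h1 with h | h
      · exact absurd h hu
      · exact h
    have hσu : σ x.1 ≠ 0 := fun h => hu (by simpa using σ.injective (h.trans (map_zero σ).symm))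
    have hv' : y.2 = 0 := by
      rcases mul_eq_zero.mp h2 with h | h
      · exact absurd h hσu
      · exact h
    exact hy (Prod.ext hu' hv')
  · by_cases hv' : y.2 = 0
    · rw [hv', mul_zero, zero_add] at h2
      have hu' : y.1 = 0 := by
        rcases mul_eq_zero.mp h2 with h | h
        · exact h
        · exact absurd h hv
      exact hy (Prod.ext hu' hv')
    · -- both x.2 ≠ 0 and y.2 ≠ 0 : derive b fixed by σ
      have hσv : σ x.2 ≠ 0 := fun h => hv (by simpa using σ.injective (h.trans (map_zero σ).symm))
      have e : y.2 * (b * (x.2 * σ x.2) - x.1 * σ x.1) = 0 := by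
        linear_combination x.2 * h1 - x.1 * h2
      have e2 : b * (x.2 * σ x.2) = x.1 * σ x.1 := by
        rcases mul_eq_zero.mp e with h | h
        · exact absurd h hv'
        · exact sub_eq_zero.mp h
      have hbe : b = x.1 * σ x.1 / (x.2 * σ x.2) := by
        field_simp
        linear_combination e2
      have hσb : σ b = b := by
        rw [hbe, map_div₀, map_mul, map_mul, hinv, hinv]
        ring
      exact hb (hfix b hσb)
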